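/- Let G be a tdlc group, H ≤ Aut(G) flat, ρ: H → ℤ a surjective homomorphism, and let U, V be compact open subgroups tidy for H. Then U_{H0} < U_ρ if and only if V_{H0} < V_ρ, where X_ρ := ⋂{α(X) : α ∈ H, ρ(α) ≥ 0} and X_{H0} := ⋂_{α ∈ H} α(X) for X ∈ {U, V}. -/

import Mathlib

set_option linter.unusedSectionVars false
set_option linter.unusedVariables false
set_option maxHeartbeats 1000000


open scoped Pointwise

namespace TdlcFlat

variable {G : Type*} [Group G] [TopologicalSpace G] [IsTopologicalGroup G]

/-- The image α(U) of a subgroup U under an automorphism α of G. -/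
def smap (α : MulAut G) (U : Subgroup G) : Subgroup G :=
  U.map α.toMonoidHom

/-- U_{α+} = ⋂_{n ≥ 0} αⁿ(U). -/
def Uplus (α : MulAut G) (U : Subgroup G) : Subgroup G :=
  ⨅ n : ℕ, smap (α ^ n) U

/-- U_{α−} = ⋂_{n ≥ 0} α⁻ⁿ(U). -/
def Uminus (α : MulAut G) (U : Subgroup G) : Subgroup G :=
  ⨅ n : ℕ, smap (α⁻¹ ^ n) U

/-- U is tidy for α: (TA) U = U_{α+} U_{α−} and (TB) ⋃_{n≥0} α⁻ⁿ(U_{α−}) is closed. -/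
def IsTidyFor (α : MulAut G) (U : Subgroup G) : Prop :=
  (U : Set G) = (Uplus α U : Set G) * (Uminus α U : Set G) ∧
    IsClosed (⋃ n : ℕ, (smap (α⁻¹ ^ n) (Uminus α U) : Set G))

/-- U is a compact open subgroup of G. -/
def IsCompactOpen (U : Subgroup G) : Prop :=
  IsCompact (U : Set G) ∧ IsOpen (U : Set G)

/-- U is tidy for the group of automorphisms H: it is tidy for every α ∈ H.
(H is flat precisely when some compact open subgroup is tidy for H.) -/
def IsTidyForGroup (H : Subgroup (MulAut G)) (U : Subgroup G) : Prop :=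
  ∀ α ∈ H, IsTidyFor α U

/-- U_{H0} = ⋂_{α ∈ H} α(U). -/
def UH0 (H : Subgroup (MulAut G)) (U : Subgroup G) : Subgroup G :=
  ⨅ α : H, smap (α : MulAut G) U

/-- E is a U-eigenfactor of H: E ≤ U, each α ∈ H has α(E) ≤ E or α(E) ≥ E,
and E = ⋂ {α(U) : α ∈ H, α(E) ≥ E}. -/
def IsEigenfactor (H : Subgroup (MulAut G)) (U E : Subgroup G) : Prop :=
  E ≤ U ∧ (∀ α ∈ H, smap α E ≤ E ∨ E ≤ smap α E) ∧
    E = ⨅ (α : H) (_ : E ≤ smap (α : MulAut G) E), smap (α : MulAut G) U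

end TdlcFlat

namespace TdlcFlat

variable {G : Type*} [Group G] [TopologicalSpace G] [IsTopologicalGroup G]

/-- U_ρ = ⋂ {α(U) : α ∈ H, ρ(α) ≥ 0}. -/
def Urho (H : Subgroup (MulAut G)) (ρ : H → ℤ) (U : Subgroup G) : Subgroup G :=
  ⨅ (α : H) (_ : 0 ≤ ρ α), smap (α : MulAut G) U

end TdlcFlat



namespace TdlcFlat

variable {G : Type*} [Group G] [TopologicalSpace G] [IsTopologicalGroup G]

theorem mem_smap' {α : MulAut G} {U : Subgroup G} {x : G} :
    x ∈ smap α U ↔ (α⁻¹ : MulAut G) x ∈ U := by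
  rw [smap, Subgroup.mem_map_equiv]; rfl

theorem smap_smap (α β : MulAut G) (U : Subgroup G) :
    smap α (smap β U) = smap (α * β) U := by
  ext x; simp only [mem_smap', mul_inv_rev, MulAut.mul_apply]

theorem smap_one (U : Subgroup G) : smap 1 U = U := by ext x; simp [mem_smap']

theorem smap_mono {α : MulAut G} {A B : Subgroup G} (h : A ≤ B) : smap α A ≤ smap α B :=
  fun x hx => mem_smap'.2 (h (mem_smap'.1 hx))

theorem isCompact_smap {α : MulAut G} (hc : Continuous ⇑α) {U : Subgroup G}
    (h : IsCompact (U : Set G)) : IsCompact (smap α U : Set G) :=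
  h.image hc

theorem continuous_pow_aut {α : MulAut G} (hc : Continuous ⇑α) (n : ℕ) :
    Continuous ⇑(α ^ n : MulAut G) := by
  induction n with
  | zero => simpa using continuous_id
  | succ k ih =>
      have : ⇑(α ^ (k+1) : MulAut G) = ⇑(α ^ k : MulAut G) ∘ ⇑α := by
        ext x; rw [pow_succ]; rfl
      rw [this]; exact ih.comp hc

section FactF
variable [T2Space G] [LocallyCompactSpace G]

theorem mem_Uplus {g : MulAut G} {W : Subgroup G} {x : G} :
    x ∈ Uplus g W ↔ ∀ n : ℕ, x ∈ smap (g ^ n) W := by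
  simp [Uplus, Subgroup.mem_iInf]

theorem uplus_le_self {g : MulAut G} {W : Subgroup G} : Uplus g W ≤ W := by
  intro x hx
  have := mem_Uplus.1 hx 0
  rwa [pow_zero, smap_one] at this

theorem uplus_le_smap {g : MulAut G} {W : Subgroup G} : Uplus g W ≤ smap g (Uplus g W) := by
  intro x hx
  rw [mem_smap', mem_Uplus]
  rw [mem_Uplus] at hx
  intro n
  have h := hx (n + 1)
  rw [mem_smap'] at h ⊢
  have e : ((g ^ n : MulAut G))⁻¹ ((g⁻¹ : MulAut G) x)
      = ((g ^ (n+1) : MulAut G))⁻¹ x := by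
    rw [← MulAut.mul_apply, ← mul_inv_rev, ← pow_succ']
  rwa [e]

theorem smap_pow_uplus_mono {g : MulAut G} {W : Subgroup G} {m n : ℕ} (h : m ≤ n) :
    smap (g ^ m) (Uplus g W) ≤ smap (g ^ n) (Uplus g W) := by
  induction n with
  | zero => simpa [Nat.le_zero.1 h]
  | succ k ih =>
      rcases Nat.lt_or_ge m (k+1) with hm | hm
      · have h1 : smap (g ^ m) (Uplus g W) ≤ smap (g ^ k) (Uplus g W) :=
          ih (Nat.lt_succ_iff.1 hm)
        have h2 : smap (g ^ k) (Uplus g W) ≤ smap (g ^ (k+1)) (Uplus g W) := by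
          have := smap_mono (α := g ^ k) (uplus_le_smap (g := g) (W := W))
          rwa [smap_smap, ← pow_succ] at this
        exact h1.trans h2
      · have : m = k + 1 := le_antisymm h hm
        subst this; exact le_rfl

theorem exists_absorb {g : MulAut G} (hc : Continuous ⇑g) {W : Subgroup G}
    (hWc : IsCompact (W : Set G))
    (hTB : IsClosed (⋃ n : ℕ, (smap (g ^ n) (Uplus g W) : Set G)))
    {C : Set G} (hC : IsCompact C)
    (hsub : C ⊆ ⋃ n : ℕ, (smap (g ^ n) (Uplus g W) : Set G)) :
    ∃ M : ℕ, C ⊆ (smap (g ^ M) (Uplus g W) : Set G) := by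
  classical
  set Wp := Uplus g W with hWp
  set A : Set G := ⋃ n : ℕ, (smap (g ^ n) Wp : Set G) with hA
  have hWpc : IsCompact (Wp : Set G) := by
    apply hWc.of_isClosed_subset
    · have hcoe : (Wp : Set G) = ⋂ n : ℕ, ((smap (g ^ n) W : Subgroup G) : Set G) := by
        rw [hWp, Uplus, Subgroup.coe_iInf]
      rw [hcoe]
      exact isClosed_iInter fun n => (isCompact_smap (continuous_pow_aut hc n) hWc).isClosed
    · exact uplus_le_self
  have hpiece : ∀ n : ℕ, IsCompact ((smap (g ^ n) Wp : Subgroup G) : Set G) :=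
    fun n => isCompact_smap (continuous_pow_aut hc n) hWpc
  have hmul : ∀ x ∈ A, ∀ y ∈ A, x * y ∈ A := by
    intro x hx y hy
    rw [hA, Set.mem_iUnion] at hx hy ⊢
    obtain ⟨m, hm⟩ := hx; obtain ⟨n, hn⟩ := hy
    exact ⟨max m n, Subgroup.mul_mem _
      (smap_pow_uplus_mono (le_max_left m n) hm)
      (smap_pow_uplus_mono (le_max_right m n) hn)⟩
  have hinv : ∀ x ∈ A, x⁻¹ ∈ A := by
    intro x hx
    rw [hA, Set.mem_iUnion] at hx ⊢
    obtain ⟨m, hm⟩ := hx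
    exact ⟨m, Subgroup.inv_mem _ hm⟩
  haveI : Nonempty ↥A := ⟨⟨1, Set.mem_iUnion.2 ⟨0, Subgroup.one_mem _⟩⟩⟩
  haveI : LocallyCompactSpace ↥A := hTB.isClosedEmbedding_subtypeVal.locallyCompactSpace
  obtain ⟨m, u, hu⟩ : ∃ (m : ℕ) (u : ↥A),
      u ∈ interior (Subtype.val ⁻¹' ((smap (g ^ m) Wp : Subgroup G) : Set G) : Set ↥A) := by
    obtain ⟨m, hm⟩ := nonempty_interior_of_iUnion_of_closed
      (f := fun n : ℕ => (Subtype.val ⁻¹' ((smap (g ^ n) Wp : Subgroup G) : Set G) : Set ↥A))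
      (fun n => ((hpiece n).isClosed).preimage continuous_subtype_val)
      (Set.eq_univ_iff_forall.2 fun z => by
        obtain ⟨i, hi⟩ := Set.mem_iUnion.1 z.2
        exact Set.mem_iUnion.2 ⟨i, hi⟩)
    obtain ⟨u, hu⟩ := hm
    exact ⟨m, u, hu⟩
  obtain ⟨O, hO, hOeq⟩ := isOpen_induced_iff.1
    (isOpen_interior (s := (Subtype.val ⁻¹' ((smap (g ^ m) Wp : Subgroup G) : Set G) : Set ↥A)))
  have huO' : u ∈ Subtype.val ⁻¹' O := Set.mem_of_mem_of_subset hu hOeq.symm.subset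
  have huO : (u : G) ∈ O := huO'
  have hOsub : O ∩ A ⊆ ((smap (g ^ m) Wp : Subgroup G) : Set G) := by
    intro y hy
    have h1 : (⟨y, hy.2⟩ : ↥A) ∈ Subtype.val ⁻¹' O := hy.1
    have h2 : (⟨y, hy.2⟩ : ↥A) ∈
        (Subtype.val ⁻¹' ((smap (g ^ m) Wp : Subgroup G) : Set G) : Set ↥A) :=
      interior_subset (hOeq.subset h1)
    exact h2
  have key : ∀ v : ↥A, ∃ kk : ℕ, ∀ x ∈ O ∩ A,
      ((v : G) * (u : G)⁻¹) * x ∈ ((smap (g ^ kk) Wp : Subgroup G) : Set G) := by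
    intro v
    have hvu : (v : G) * (u : G)⁻¹ ∈ A := hmul _ v.2 _ (hinv _ u.2)
    obtain ⟨k0, hk0⟩ := Set.mem_iUnion.1 hvu
    refine ⟨max k0 m, fun x hx => ?_⟩
    exact Subgroup.mul_mem _
      (smap_pow_uplus_mono (le_max_left _ _) hk0)
      (smap_pow_uplus_mono (le_max_right _ _) (hOsub hx))
  choose kk hkk using key
  have hcover : C ⊆ ⋃ v : ↥A, ((v : G) * (u : G)⁻¹) • O := by
    intro c hcC
    refine Set.mem_iUnion.2 ⟨⟨c, hsub hcC⟩, ?_⟩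
    rw [Set.mem_smul_set_iff_inv_smul_mem]
    show (c * (u : G)⁻¹)⁻¹ • c ∈ O
    have : (c * (u : G)⁻¹)⁻¹ * c = (u : G) := by group
    rwa [smul_eq_mul, this]
  obtain ⟨t, ht⟩ := hC.elim_finite_subcover
    (fun v : ↥A => ((v : G) * (u : G)⁻¹) • O) (fun v => hO.smul _) hcover
  refine ⟨t.sup kk, fun c hcC => ?_⟩
  have hcA : c ∈ A := hsub hcC
  have hct := ht hcC
  rw [Set.mem_iUnion₂] at hct
  obtain ⟨v, hvt, hcv⟩ := hct
  have ho : ((v : G) * (u : G)⁻¹)⁻¹ * c ∈ O := by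
    rw [Set.mem_smul_set_iff_inv_smul_mem, smul_eq_mul] at hcv
    exact hcv
  have hoA : ((v : G) * (u : G)⁻¹)⁻¹ * c ∈ A :=
    hmul _ (hinv _ (hmul _ v.2 _ (hinv _ u.2))) _ hcA
  have hres := hkk v _ ⟨ho, hoA⟩
  rw [mul_inv_cancel_left] at hres
  exact smap_pow_uplus_mono (Finset.le_sup hvt) hres

theorem factF {W : Subgroup G} {g : MulAut G}
    (hgc : Continuous ⇑g)
    (hW : IsCompactOpen W)
    (hTA : (W : Set G) = (Uplus g W : Set G) * (Uminus g W : Set G))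
    (hTB : IsClosed (⋃ n : ℕ, (smap (g ^ n) (Uplus g W) : Set G)))
    {x : G} (hx : x ∈ W) {K : Set G} (hK : IsCompact K)
    (horb : ∀ n : ℕ, (g ^ n : MulAut G) x ∈ K) :
    ∀ n : ℕ, (g ^ n : MulAut G) x ∈ W := by
  have hxTA : x ∈ (Uplus g W : Set G) * (Uminus g W : Set G) := by
    rw [← hTA]; exact hx
  rw [Set.mem_mul] at hxTA
  obtain ⟨a, ha, b, hb, hab⟩ := hxTA
  have ha' : a ∈ Uplus g W := ha
  have hb' : b ∈ Uminus g W := hb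
  have hbW : ∀ n : ℕ, (g ^ n : MulAut G) b ∈ W := by
    intro n
    have h1 : b ∈ smap ((g⁻¹ : MulAut G) ^ n) W := Subgroup.mem_iInf.1 hb' n
    rw [mem_smap'] at h1
    rwa [inv_pow, inv_inv] at h1
  have haA : ∀ n : ℕ, (g ^ n : MulAut G) a ∈ ((smap (g ^ n) (Uplus g W) : Subgroup G) : Set G) := by
    intro n
    rw [SetLike.mem_coe, mem_smap']
    have : ((g ^ n : MulAut G))⁻¹ ((g ^ n : MulAut G) a) = a := by
      rw [← MulAut.mul_apply, inv_mul_cancel]; rfl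
    rwa [this]
  have haK : ∀ n : ℕ, (g ^ n : MulAut G) a ∈ K * (W : Set G) := by
    intro n
    have e : (g ^ n : MulAut G) a = ((g ^ n : MulAut G) x) * (((g ^ n : MulAut G) b)⁻¹) := by
      rw [← hab, map_mul]; group
    rw [e]
    exact Set.mul_mem_mul (horb n) (Subgroup.inv_mem _ (hbW n))
  set A : Set G := ⋃ n : ℕ, ((smap (g ^ n) (Uplus g W) : Subgroup G) : Set G) with hA
  have hCc : IsCompact (A ∩ (K * (W : Set G))) := (hK.mul hW.1).inter_left hTB
  obtain ⟨M, hM⟩ := exists_absorb hgc hW.1 hTB hCc Set.inter_subset_left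
  intro n
  have h1 : (g ^ (M + n) : MulAut G) a ∈ ((smap (g ^ M) (Uplus g W) : Subgroup G) : Set G) :=
    hM ⟨Set.mem_iUnion.2 ⟨M + n, haA (M + n)⟩, haK (M + n)⟩
  have h2 : (g ^ n : MulAut G) a ∈ Uplus g W := by
    rw [SetLike.mem_coe, mem_smap'] at h1
    have e : ((g ^ M : MulAut G))⁻¹ ((g ^ (M + n) : MulAut G) a) = (g ^ n : MulAut G) a := by
      rw [← MulAut.mul_apply, pow_add, inv_mul_cancel_left]
    rwa [e] at h1
  have h3 : (g ^ n : MulAut G) a ∈ W := uplus_le_self h2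
  have e2 : (g ^ n : MulAut G) x = ((g ^ n : MulAut G) a) * ((g ^ n : MulAut G) b) := by
    rw [← hab, map_mul]
  rw [e2]
  exact W.mul_mem h3 (hbW n)


end FactF

theorem smap_le_smap_iff {α : MulAut G} {A B : Subgroup G} :
    smap α A ≤ smap α B ↔ A ≤ B := by
  constructor
  · intro h x hx
    have := h (x := α x) (by rw [mem_smap']; simpa using hx)
    rw [mem_smap'] at this
    simpa using this
  · exact smap_mono

theorem smap_inj {α : MulAut G} {A B : Subgroup G} (h : smap α A = smap α B) : A = B :=
  le_antisymm (smap_le_smap_iff.1 h.le) (smap_le_smap_iff.1 h.ge)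

theorem smap_inf (α : MulAut G) (A B : Subgroup G) :
    smap α (A ⊓ B) = smap α A ⊓ smap α B := by
  ext x; simp [mem_smap', Subgroup.mem_inf]

theorem t2space_of_td [TotallyDisconnectedSpace G] : T2Space G := by
  rw [IsTopologicalGroup.t2Space_iff_one_closed]
  have hsub : (closure ({1} : Set G)).Subsingleton :=
    isTotallyDisconnected_of_totallyDisconnectedSpace (closure {1}) _ le_rfl
      isPreconnected_singleton.closure
  have h : closure ({1} : Set G) = {1} :=
    hsub.eq_singleton_of_mem (subset_closure rfl)
  rw [← h]; exact isClosed_closure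

section Rho

variable {H : Subgroup (MulAut G)} {ρ : H → ℤ}

def Jgrp (H : Subgroup (MulAut G)) (ρ : H → ℤ) (U : Subgroup G) (n : ℤ) : Subgroup G :=
  ⨅ (δ : H) (_ : n ≤ ρ δ), smap (δ : MulAut G) U

theorem mem_Jgrp {U : Subgroup G} {n : ℤ} {x : G} :
    x ∈ Jgrp H ρ U n ↔ ∀ δ : H, n ≤ ρ δ → x ∈ smap (δ : MulAut G) U := by
  simp [Jgrp, Subgroup.mem_iInf]

theorem Urho_eq_Jgrp (U : Subgroup G) : Urho H ρ U = Jgrp H ρ U 0 := rfl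

theorem mem_UH0 {U : Subgroup G} {x : G} :
    x ∈ UH0 H U ↔ ∀ δ : H, x ∈ smap (δ : MulAut G) U := by
  simp [UH0, Subgroup.mem_iInf]

variable (hhom : ∀ a b : H, ρ (a * b) = ρ a + ρ b)
include hhom

theorem rho_one : ρ 1 = 0 := by
  have := hhom 1 1
  rw [mul_one] at this
  omega

theorem rho_inv (δ : H) : ρ δ⁻¹ = -ρ δ := by
  have := hhom δ⁻¹ δ
  rw [inv_mul_cancel, rho_one hhom] at this
  omega

theorem rho_pow (δ : H) (n : ℕ) : ρ (δ ^ n) = n * ρ δ := by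
  induction n with
  | zero => simpa using rho_one hhom
  | succ k ih =>
      have := hhom (δ ^ k) δ
      rw [← pow_succ] at this
      rw [this, ih]
      push_cast
      ring

theorem J_mono {U : Subgroup G} {m n : ℤ} (h : m ≤ n) :
    Jgrp H ρ U m ≤ Jgrp H ρ U n := by
  intro x hx
  rw [mem_Jgrp] at hx ⊢
  exact fun δ hδ => hx δ (h.trans hδ)

theorem smap_Jgrp (β : H) (U : Subgroup G) (n : ℤ) :
    smap (β : MulAut G) (Jgrp H ρ U n) = Jgrp H ρ U (n + ρ β) := by
  have hmem : ∀ x : G, x ∈ smap (β : MulAut G) (Jgrp H ρ U n) ↔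
      ∀ δ : H, n ≤ ρ δ → x ∈ smap ((β : MulAut G) * (δ : MulAut G)) U := by
    intro x
    rw [mem_smap']
    rw [mem_Jgrp]
    constructor
    · intro h δ hδ
      have := h δ hδ
      rw [mem_smap'] at this
      rw [mem_smap', mul_inv_rev, MulAut.mul_apply]
      exact this
    · intro h δ hδ
      have := h δ hδ
      rw [mem_smap', mul_inv_rev, MulAut.mul_apply] at this
      rw [mem_smap']
      exact this
  ext x
  rw [hmem, mem_Jgrp]
  constructor
  · intro h γ hγ
    have hcond : n ≤ ρ (β⁻¹ * γ) := by
      rw [hhom, rho_inv hhom]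
      omega
    have := h (β⁻¹ * γ) hcond
    have e : (β : MulAut G) * ((β⁻¹ * γ : H) : MulAut G) = (γ : MulAut G) := by
      push_cast
      rw [mul_inv_cancel_left]
    rwa [e] at this
  · intro h δ hδ
    have hcond : n + ρ β ≤ ρ (β * δ) := by
      rw [hhom]; omega
    have := h (β * δ) hcond
    have e : ((β * δ : H) : MulAut G) = (β : MulAut G) * (δ : MulAut G) := by push_cast; rfl
    rwa [e] at this

theorem UH0_eq_iInf_Jgrp (U : Subgroup G) : UH0 H U = ⨅ n : ℤ, Jgrp H ρ U n := by
  apply le_antisymm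
  · refine le_iInf fun n => ?_
    intro x hx
    rw [mem_UH0] at hx
    rw [mem_Jgrp]
    exact fun δ _ => hx δ
  · intro x hx
    rw [Subgroup.mem_iInf] at hx
    rw [mem_UH0]
    intro δ
    exact mem_Jgrp.1 (hx (ρ δ)) δ le_rfl

theorem UH0_le_Urho (U : Subgroup G) : UH0 H U ≤ Urho H ρ U := by
  rw [UH0_eq_iInf_Jgrp hhom, Urho_eq_Jgrp]
  exact iInf_le _ 0

theorem UH0_eq_Urho_iff_inv {a : H} (ha : ρ a = 1) (U : Subgroup G) :
    UH0 H U = Urho H ρ U ↔ smap (a : MulAut G) (Urho H ρ U) = Urho H ρ U := by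
  have hsm : ∀ n : ℤ, smap (a : MulAut G) (Jgrp H ρ U n) = Jgrp H ρ U (n + 1) := by
    intro n; rw [smap_Jgrp hhom, ha]
  have hsm' : smap (a : MulAut G) (Jgrp H ρ U 0) = Jgrp H ρ U 1 := by
    have := hsm 0
    norm_num at this
    exact this
  constructor
  · intro h
    have h2 : UH0 H U ≤ Jgrp H ρ U (-1) := by
      rw [UH0_eq_iInf_Jgrp hhom]; exact iInf_le _ (-1)
    have h3 : Jgrp H ρ U (-1) ≤ Jgrp H ρ U 0 := J_mono hhom (by omega)
    have heq : Jgrp H ρ U (-1) = Jgrp H ρ U 0 := by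
      apply le_antisymm h3
      rw [Urho_eq_Jgrp] at h
      rw [← h]
      exact h2
    have h5 := congrArg (smap (a : MulAut G)) heq
    rw [hsm (-1), hsm'] at h5
    norm_num at h5
    rw [Urho_eq_Jgrp, hsm']
    exact h5.symm
  · intro h
    have hkey : Jgrp H ρ U 1 = Jgrp H ρ U 0 := by
      rw [← hsm']
      exact h
    have hup : ∀ n : ℤ, Jgrp H ρ U n = Jgrp H ρ U 0 → Jgrp H ρ U (n + 1) = Jgrp H ρ U 0 := by
      intro n hn
      have h5 := congrArg (smap (a : MulAut G)) hn
      rw [hsm n, hsm'] at h5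
      rw [h5, hkey]
    have hdown : ∀ n : ℤ, Jgrp H ρ U n = Jgrp H ρ U 0 → Jgrp H ρ U (n - 1) = Jgrp H ρ U 0 := by
      intro n hn
      apply smap_inj (α := (a : MulAut G))
      rw [hsm (n - 1), hsm']
      have e : n - 1 + 1 = n := by ring
      rw [e, hn, hkey]
    have hstep : ∀ n : ℤ, Jgrp H ρ U n = Jgrp H ρ U 0 := by
      intro n
      induction n using Int.induction_on with
      | zero => rfl
      | succ k ih => exact hup k ih
      | pred k ih =>
          have h6 := hdown (-k) ih
          exact h6
    rw [UH0_eq_iInf_Jgrp hhom, Urho_eq_Jgrp]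
    apply le_antisymm
    · exact iInf_le _ 0
    · exact le_iInf fun n => (hstep n).ge

theorem UH0_lt_Urho_iff_ne {a : H} (ha : ρ a = 1) (U : Subgroup G) :
    UH0 H U < Urho H ρ U ↔ smap (a : MulAut G) (Urho H ρ U) ≠ Urho H ρ U := by
  constructor
  · intro hlt heq
    exact hlt.ne ((UH0_eq_Urho_iff_inv hhom ha U).2 heq)
  · intro hne
    exact lt_of_le_of_ne (UH0_le_Urho hhom U)
      fun heq => hne ((UH0_eq_Urho_iff_inv hhom ha U).1 heq)


theorem Urho_le_self (U : Subgroup G) :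
    Urho H ρ U ≤ U := by
  intro x hx
  have hx' : x ∈ Jgrp H ρ U 0 := by rw [← Urho_eq_Jgrp]; exact hx
  have h := mem_Jgrp.1 hx' 1 (le_of_eq (rho_one hhom).symm)
  rwa [OneMemClass.coe_one, smap_one] at h

theorem isCompact_Urho [T2Space G]
    (hcont : ∀ α ∈ H, Continuous ⇑α)
    {U : Subgroup G} (hU : IsCompactOpen U) :
    IsCompact ((Urho H ρ U : Subgroup G) : Set G) := by
  apply hU.1.of_isClosed_subset
  · have hcoe : ((Urho H ρ U : Subgroup G) : Set G) =
        ⋂ (δ : H), ⋂ (_ : 0 ≤ ρ δ), ((smap (δ : MulAut G) U : Subgroup G) : Set G) := by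
      simp [Urho, Subgroup.coe_iInf]
    rw [hcoe]
    exact isClosed_iInter fun δ => isClosed_iInter fun _ =>
      (isCompact_smap (hcont _ δ.2) hU.1).isClosed
  · exact Urho_le_self hhom U

end Rho

theorem relindex_smap (e : MulAut G) (A B : Subgroup G) :
    (smap e A).relIndex (smap e B) = A.relIndex B := by
  have h1 : smap e A = Subgroup.comap (e⁻¹ : MulAut G).toMonoidHom A := by
    ext x; rw [mem_smap', Subgroup.mem_comap]; rfl
  rw [h1, Subgroup.relIndex_comap]
  have h2 : Subgroup.map (e⁻¹ : MulAut G).toMonoidHom (smap e B) = B := by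
    show smap (e⁻¹) (smap e B) = B
    rw [smap_smap, inv_mul_cancel, smap_one]
  rw [h2]

theorem relindex_inf_ne_zero {K O : Subgroup G}
    (hK : IsCompact (K : Set G)) (hO : IsOpen (O : Set G)) :
    (O ⊓ K).relIndex K ≠ 0 := by
  classical
  have hcov : (K : Set G) ⊆ ⋃ k : ↥K, (k : G) • (O : Set G) := by
    intro x hx
    refine Set.mem_iUnion.2 ⟨⟨x, hx⟩, ?_⟩
    rw [Set.mem_smul_set_iff_inv_smul_mem, smul_eq_mul, inv_mul_cancel]
    exact O.one_mem
  obtain ⟨t, ht⟩ := hK.elim_finite_subcover (fun k : ↥K => (k : G) • (O : Set G))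
    (fun k => hO.smul _) hcov
  have hfin : Finite (↥K ⧸ (O ⊓ K).subgroupOf K) := by
    refine Finite.of_surjective
      (fun i : ↥t => (QuotientGroup.mk i.1 : ↥K ⧸ (O ⊓ K).subgroupOf K)) ?_
    intro q
    obtain ⟨k, rfl⟩ := QuotientGroup.mk_surjective q
    have hk := ht k.2
    rw [Set.mem_iUnion₂] at hk
    obtain ⟨i, hit, hki⟩ := hk
    refine ⟨⟨i, hit⟩, ?_⟩
    rw [QuotientGroup.eq]
    rw [Subgroup.mem_subgroupOf]
    rw [Set.mem_smul_set_iff_inv_smul_mem, smul_eq_mul] at hki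
    refine Subgroup.mem_inf.2 ⟨?_, ?_⟩
    · simpa using hki
    · exact K.mul_mem (K.inv_mem i.2) k.2
  exact Subgroup.index_ne_zero_of_finite

section Main

variable [T2Space G] [LocallyCompactSpace G]

theorem crux
    {H : Subgroup (MulAut G)} (hcont : ∀ α ∈ H, Continuous ⇑α)
    {ρ : H → ℤ} (hhom : ∀ a b : H, ρ (a * b) = ρ a + ρ b)
    {U V : Subgroup G} (hUc : IsCompact (U : Set G))
    (hV : IsCompactOpen V) (htidyV : IsTidyForGroup H V) :
    Urho H ρ U ⊓ V ≤ Urho H ρ V := by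
  intro x hx
  obtain ⟨hxU, hxV⟩ := Subgroup.mem_inf.1 hx
  rw [Urho_eq_Jgrp, mem_Jgrp]
  intro δ hδ
  have hgH : ((δ : MulAut G))⁻¹ ∈ H := by
    have := H.inv_mem δ.2
    simpa using this
  have htid : IsTidyFor ((δ : MulAut G))⁻¹ V := htidyV _ hgH
  have hTA := htid.1
  have hTB0 := (htidyV (δ : MulAut G) δ.2).2
  rw [show Uminus (δ : MulAut G) V = Uplus ((δ : MulAut G))⁻¹ V from rfl] at hTB0
  have hgc : Continuous ⇑(((δ : MulAut G))⁻¹) := hcont _ hgH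
  have horb : ∀ n : ℕ, ((((δ : MulAut G))⁻¹) ^ n) x ∈ (U : Set G) := by
    intro n
    have hcond : (0 : ℤ) ≤ ρ (δ ^ n) := by
      rw [rho_pow hhom]
      exact mul_nonneg (Int.natCast_nonneg n) hδ
    have hmem := mem_Jgrp.1 (by rw [← Urho_eq_Jgrp]; exact hxU) (δ ^ n) hcond
    rw [mem_smap'] at hmem
    have e : (((δ ^ n : H) : MulAut G))⁻¹ = (((δ : MulAut G))⁻¹) ^ n := by
      push_cast
      rw [inv_pow]
    rwa [e] at hmem
  have hres := factF hgc hV hTA hTB0 hxV hUc horb 1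
  rw [pow_one] at hres
  rw [mem_smap']
  exact hres

theorem transfer
    {H : Subgroup (MulAut G)} (hcont : ∀ α ∈ H, Continuous ⇑α)
    {ρ : H → ℤ} (hhom : ∀ a b : H, ρ (a * b) = ρ a + ρ b)
    {a : H} (ha : ρ a = 1)
    {U V : Subgroup G} (hU : IsCompactOpen U) (htidyU : IsTidyForGroup H U)
    (hV : IsCompactOpen V) (htidyV : IsTidyForGroup H V)
    (hinv : smap (a : MulAut G) (Urho H ρ U) = Urho H ρ U) :
    smap (a : MulAut G) (Urho H ρ V) = Urho H ρ V := by
  classical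
  set P := Urho H ρ U with hPdef
  set Q := Urho H ρ V with hQdef
  have hPU : P ≤ U := Urho_le_self hhom U
  have hQV : Q ≤ V := Urho_le_self hhom V
  have hPc : IsCompact (P : Set G) := isCompact_Urho hhom hcont hU
  have hQc : IsCompact (Q : Set G) := isCompact_Urho hhom hcont hV
  have hcx1 : P ⊓ V ≤ Q := crux hcont hhom hU.1 hV htidyV
  have hcx2 : Q ⊓ U ≤ P := crux hcont hhom hV.1 hU htidyU
  set D := P ⊓ Q with hDdef
  have hD1 : D = V ⊓ P := by
    apply le_antisymm
    · exact le_inf (inf_le_right.trans hQV) inf_le_left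
    · refine le_inf inf_le_right ?_
      have hcomm : V ⊓ P = P ⊓ V := inf_comm V P
      rw [hcomm]; exact hcx1
  have hD2 : D = U ⊓ Q := by
    apply le_antisymm
    · exact le_inf (inf_le_left.trans hPU) inf_le_right
    · refine le_inf ?_ inf_le_right
      have hcomm : U ⊓ Q = Q ⊓ U := inf_comm U Q
      rw [hcomm]; exact hcx2
  have hn1 : D.relIndex P ≠ 0 := by rw [hD1]; exact relindex_inf_ne_zero hPc hV.2
  have hn2 : D.relIndex Q ≠ 0 := by rw [hD2]; exact relindex_inf_ne_zero hQc hU.2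
  have hQmono : Q ≤ smap (a : MulAut G) Q := by
    rw [hQdef, Urho_eq_Jgrp, smap_Jgrp hhom, ha]
    exact J_mono hhom (by omega)
  have hSmono : ∀ n : ℕ,
      smap ((a : MulAut G) ^ n) Q ≤ smap ((a : MulAut G) ^ (n + 1)) Q := by
    intro n
    have h1 := smap_mono (α := (a : MulAut G) ^ n) hQmono
    rwa [smap_smap, ← pow_succ] at h1
  have hSmono' : ∀ m n : ℕ, m ≤ n →
      smap ((a : MulAut G) ^ m) Q ≤ smap ((a : MulAut G) ^ n) Q := by
    intro m n h
    induction n with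
    | zero => rw [Nat.le_zero.1 h]
    | succ k ih =>
        rcases Nat.lt_or_ge m (k + 1) with hm | hm
        · exact (ih (Nat.lt_succ_iff.1 hm)).trans (hSmono k)
        · rw [le_antisymm h hm]
  have hPinv : ∀ n : ℕ, smap ((a : MulAut G) ^ n) P = P := by
    intro n
    induction n with
    | zero => rw [pow_zero, smap_one]
    | succ k ih => rw [pow_succ, ← smap_smap, hinv, ih]
  have hDn : ∀ n : ℕ, smap ((a : MulAut G) ^ n) D = P ⊓ smap ((a : MulAut G) ^ n) Q := by
    intro n
    rw [hDdef, smap_inf, hPinv n]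
  have hDstep : D ≤ smap (a : MulAut G) D := by
    rw [hDdef, smap_inf, hinv]
    exact le_inf inf_le_left (inf_le_right.trans hQmono)
  have hDchain : ∀ n : ℕ, D ≤ smap ((a : MulAut G) ^ n) D := by
    intro n
    induction n with
    | zero => rw [pow_zero, smap_one]
    | succ k ih =>
        have h2 : smap ((a : MulAut G) ^ k) D ≤ smap ((a : MulAut G) ^ (k + 1)) D := by
          have h3 := smap_mono (α := (a : MulAut G) ^ k) hDstep
          rwa [smap_smap, ← pow_succ] at h3
        exact ih.trans h2
  have hDQ : D ≤ Q := inf_le_right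
  have hDSn : ∀ n : ℕ, D ≤ smap ((a : MulAut G) ^ n) Q := by
    intro n
    have h0 : D ≤ smap ((a : MulAut G) ^ 0) Q := by rw [pow_zero, smap_one]; exact hDQ
    exact h0.trans (hSmono' 0 n (Nat.zero_le n))
  have hfact : ∀ n : ℕ, D.relIndex (smap ((a : MulAut G) ^ n) Q) =
      D.relIndex (smap ((a : MulAut G) ^ n) D) * D.relIndex Q := by
    intro n
    have hc1 : D ≤ smap ((a : MulAut G) ^ n) D := hDchain n
    have hc2 : smap ((a : MulAut G) ^ n) D ≤ smap ((a : MulAut G) ^ n) Q := by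
      rw [hDn n]; exact inf_le_right
    have hmul := Subgroup.relIndex_mul_relIndex _ _ _ hc1 hc2
    rw [← hmul]
    congr 1
    have := relindex_smap ((a : MulAut G) ^ n) D Q
    rw [this]
  have hApos : ∀ n : ℕ, D.relIndex (smap ((a : MulAut G) ^ n) D) ≠ 0 ∧
      D.relIndex (smap ((a : MulAut G) ^ n) D) ≤ D.relIndex P := by
    intro n
    have hc1 : D ≤ smap ((a : MulAut G) ^ n) D := hDchain n
    have hc3 : smap ((a : MulAut G) ^ n) D ≤ P := by rw [hDn n]; exact inf_le_left
    have hmul := Subgroup.relIndex_mul_relIndex _ _ _ hc1 hc3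
    constructor
    · intro h0; apply hn1; rw [← hmul, h0, zero_mul]
    · have hb : (smap ((a : MulAut G) ^ n) D).relIndex P ≠ 0 := by
        intro h0; apply hn1; rw [← hmul, h0, mul_zero]
      calc D.relIndex (smap ((a : MulAut G) ^ n) D)
          ≤ D.relIndex (smap ((a : MulAut G) ^ n) D) *
            ((smap ((a : MulAut G) ^ n) D).relIndex P) :=
            Nat.le_mul_of_pos_right _ (Nat.pos_of_ne_zero hb)
        _ = D.relIndex P := hmul
  have hfne : ∀ n : ℕ, D.relIndex (smap ((a : MulAut G) ^ n) Q) ≠ 0 := by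
    intro n
    rw [hfact n]
    exact Nat.mul_ne_zero (hApos n).1 hn2
  have hfle : ∀ n : ℕ, D.relIndex (smap ((a : MulAut G) ^ n) Q) ≤
      D.relIndex P * D.relIndex Q := by
    intro n
    rw [hfact n]
    exact Nat.mul_le_mul_right _ (hApos n).2
  have hstab : ∃ n : ℕ, smap ((a : MulAut G) ^ n) Q = smap ((a : MulAut G) ^ (n + 1)) Q := by
    by_contra hcne
    push_neg at hcne
    have hgrow : ∀ n : ℕ, 2 ^ n ≤ D.relIndex (smap ((a : MulAut G) ^ n) Q) := by
      intro n
      induction n with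
      | zero => exact Nat.one_le_iff_ne_zero.2 (hfne 0)
      | succ k ih =>
          have heq := Subgroup.relIndex_mul_relIndex _ _ _ (hDSn k) (hSmono k)
          have hr0 : (smap ((a : MulAut G) ^ k) Q).relIndex
              (smap ((a : MulAut G) ^ (k + 1)) Q) ≠ 0 := by
            intro h0; apply hfne (k + 1); rw [← heq, h0, mul_zero]
          have hr1 : (smap ((a : MulAut G) ^ k) Q).relIndex
              (smap ((a : MulAut G) ^ (k + 1)) Q) ≠ 1 := by
            intro h1
            exact hcne k (le_antisymm (hSmono k) (Subgroup.relIndex_eq_one.1 h1))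
          have hr2 : 2 ≤ (smap ((a : MulAut G) ^ k) Q).relIndex
              (smap ((a : MulAut G) ^ (k + 1)) Q) := by omega
          calc (2 : ℕ) ^ (k + 1) = 2 ^ k * 2 := by ring
            _ ≤ D.relIndex (smap ((a : MulAut G) ^ k) Q) *
                ((smap ((a : MulAut G) ^ k) Q).relIndex
                  (smap ((a : MulAut G) ^ (k + 1)) Q)) := Nat.mul_le_mul ih hr2
            _ = D.relIndex (smap ((a : MulAut G) ^ (k + 1)) Q) := heq
    have h1 := hgrow (D.relIndex P * D.relIndex Q)
    have h2 := hfle (D.relIndex P * D.relIndex Q)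
    have h3 := Nat.lt_two_pow_self (n := D.relIndex P * D.relIndex Q)
    omega
  obtain ⟨n, hn⟩ := hstab
  have hsn : smap ((a : MulAut G) ^ n) Q = smap ((a : MulAut G) ^ n) (smap (a : MulAut G) Q) := by
    rw [smap_smap, ← pow_succ]
    exact hn
  exact (smap_inj hsn).symm

end Main
end TdlcFlat


open TdlcFlat in
/-- Let G be a tdlc group, H ≤ Aut(G) flat, ρ : H → ℤ a
surjective homomorphism, and U, V compact open subgroups tidy for H. Then
U_{H0} < U_ρ if and only if V_{H0} < V_ρ. -/
theorem UH0_lt_Urho_iff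
    {G : Type*} [Group G] [TopologicalSpace G] [IsTopologicalGroup G]
    [LocallyCompactSpace G] [TotallyDisconnectedSpace G]
    (H : Subgroup (MulAut G))
    (hcont : ∀ α ∈ H, Continuous ⇑α)
    (ρ : H → ℤ) (hhom : ∀ a b : H, ρ (a * b) = ρ a + ρ b)
    (hsurj : Function.Surjective ρ)
    (U V : Subgroup G)
    (hU : IsCompactOpen U) (htidyU : IsTidyForGroup H U)
    (hV : IsCompactOpen V) (htidyV : IsTidyForGroup H V) :
    UH0 H U < Urho H ρ U ↔ UH0 H V < Urho H ρ V := by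
  haveI : T2Space G := TdlcFlat.t2space_of_td
  obtain ⟨a, ha⟩ := hsurj 1
  rw [TdlcFlat.UH0_lt_Urho_iff_ne hhom ha U, TdlcFlat.UH0_lt_Urho_iff_ne hhom ha V]
  constructor
  · intro h hVeq
    exact h (TdlcFlat.transfer hcont hhom ha hV htidyV hU htidyU hVeq)
  · intro h hUeq
    exact h (TdlcFlat.transfer hcont hhom ha hU htidyU hV htidyV hUeq)
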